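/- For non-negative integers n and p, Gessel's identity holds: A_{n,n+p} = Σ_{k=0}^{⌊p/2⌋} 2^{p-2k} C(p, 2k) A_{n,k}, where A_{n,m} is the super Catalan number. -/

import Mathlib

/-- The super Catalan number `A_{n,m} = (2n)!(2m)!/(n!(n+m)!m!)` as a rational number. -/
noncomputable def superCatalan (n m : ℕ) : ℚ :=
  (Nat.factorial (2 * n) * Nat.factorial (2 * m) : ℚ) /
    (Nat.factorial n * Nat.factorial (n + m) * Nat.factorial m)

private lemma factQ_ne (m : ℕ) : (Nat.factorial m : ℚ) ≠ 0 := by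
  exact_mod_cast Nat.factorial_ne_zero m

/-- `F n p k` is the summand `2^p (1/4)^k C(p,2k) A_{n,k}`. -/
noncomputable def gesselF (n p k : ℕ) : ℚ :=
  2 ^ p * (4 : ℚ)⁻¹ ^ k * (Nat.choose p (2 * k) : ℚ) * superCatalan n k

/-- WZ certificate function. -/
noncomputable def gesselG (n p k : ℕ) : ℚ :=
  -(8 * k * ((n : ℚ) + k) * 2 ^ p * (4 : ℚ)⁻¹ ^ k *
      (Nat.choose (p + 1) (2 * k) : ℚ) * superCatalan n k)

private lemma h1Q (p k : ℕ) :
    ((p : ℚ) + 1 - 2 * k) * (Nat.choose (p + 1) (2 * k) : ℚ)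
      = ((p : ℚ) + 1) * (Nat.choose p (2 * k) : ℚ) := by
  by_cases h : 2 * k ≤ p + 1
  · have hn := Nat.choose_mul_succ_eq p (2 * k)
    have hc : ((Nat.choose p (2 * k) * (p + 1) : ℕ) : ℚ)
        = ((Nat.choose (p + 1) (2 * k) * (p + 1 - 2 * k) : ℕ) : ℚ) := congrArg _ hn
    push_cast [Nat.cast_sub h] at hc
    linarith
  · push_neg at h
    have h1 : p + 1 < 2 * k := h
    have h2 : p < 2 * k := by omega
    simp [Nat.choose_eq_zero_of_lt h1, Nat.choose_eq_zero_of_lt h2]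

private lemma h2Q (p k : ℕ) :
    ((2 * k : ℚ) + 1) * ((2 * k : ℚ) + 2) * (Nat.choose (p + 1) (2 * k + 2) : ℚ)
      = ((p : ℚ) + 1) * ((p : ℚ) - 2 * k) * (Nat.choose p (2 * k) : ℚ) := by
  by_cases h : 2 * k ≤ p
  · have e1 : (p + 1) * Nat.choose p (2 * k + 1) = Nat.choose (p + 1) (2 * k + 2) * (2 * k + 2) :=
      Nat.add_one_mul_choose_eq p (2 * k + 1)
    have e2 : Nat.choose p (2 * k + 1) * (2 * k + 1) = Nat.choose p (2 * k) * (p - 2 * k) :=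
      Nat.choose_succ_right_eq p (2 * k)
    have hn : (2 * k + 1) * ((2 * k + 2) * Nat.choose (p + 1) (2 * k + 2))
        = (p + 1) * (Nat.choose p (2 * k) * (p - 2 * k)) := by
      calc (2 * k + 1) * ((2 * k + 2) * Nat.choose (p + 1) (2 * k + 2))
          = (2 * k + 1) * ((p + 1) * Nat.choose p (2 * k + 1)) := by rw [e1]; ring
        _ = (p + 1) * (Nat.choose p (2 * k + 1) * (2 * k + 1)) := by ring
        _ = (p + 1) * (Nat.choose p (2 * k) * (p - 2 * k)) := by rw [e2]
    have hc : (((2 * k + 1) * ((2 * k + 2) * Nat.choose (p + 1) (2 * k + 2)) : ℕ) : ℚ)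
        = (((p + 1) * (Nat.choose p (2 * k) * (p - 2 * k)) : ℕ) : ℚ) := congrArg _ hn
    push_cast [Nat.cast_sub h] at hc
    linarith
  · push_neg at h
    have h1 : p + 1 < 2 * k + 2 := by omega
    simp [Nat.choose_eq_zero_of_lt h1, Nat.choose_eq_zero_of_lt h]

private lemma h3Q (n k : ℕ) :
    ((n : ℚ) + k + 1) * ((k : ℚ) + 1) * superCatalan n (k + 1)
      = ((2 * k : ℚ) + 1) * ((2 * k : ℚ) + 2) * superCatalan n k := by
  unfold superCatalan
  have e1 : 2 * (k + 1) = 2 * k + 1 + 1 := by ring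
  have e2 : n + (k + 1) = n + k + 1 := by ring
  rw [e1, e2, Nat.factorial_succ (2 * k + 1), Nat.factorial_succ (2 * k),
    Nat.factorial_succ (n + k), Nat.factorial_succ k]
  push_cast
  field_simp
  ring

private lemma gessel_step (n p k : ℕ) :
    ((p : ℚ) + 1) * ((2 * n + p + 1) * gesselF n (p + 1) k
        - (4 * n + 4 * p + 2) * gesselF n p k)
      = gesselG n p (k + 1) - gesselG n p k := by
  have h1 := h1Q p k
  have h2 := h2Q p k
  have h3 := h3Q n k
  have e1 : 2 * (k + 1) = 2 * k + 2 := by ring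
  unfold gesselF gesselG
  rw [e1]
  push_cast
  linear_combination (8 * (2:ℚ) ^ p * (4:ℚ)⁻¹ ^ (k+1) * (Nat.choose (p+1) (2*k+2) : ℚ)) * h3
    + (8 * (2:ℚ) ^ p * (4:ℚ)⁻¹ ^ (k+1) * superCatalan n k) * h2
    + (8 * (2:ℚ) ^ p * (4:ℚ)⁻¹ ^ (k+1) * (2*n+p+2*k+1) * superCatalan n k) * h1

private lemma sum_rec (n p : ℕ) :
    ((2 * n : ℚ) + p + 1) * ∑ k ∈ Finset.range (p + 2), gesselF n (p + 1) k
      = ((4 * n : ℚ) + 4 * p + 2) * ∑ k ∈ Finset.range (p + 1), gesselF n p k := by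
  have g0 : gesselG n p 0 = 0 := by simp [gesselG]
  have gtop : gesselG n p (p + 2) = 0 := by
    have h : p + 1 < 2 * (p + 2) := by omega
    simp [gesselG, Nat.choose_eq_zero_of_lt h]
  have hF : gesselF n p (p + 1) = 0 := by
    have h : p < 2 * (p + 1) := by omega
    simp [gesselF, Nat.choose_eq_zero_of_lt h]
  have key : ((p : ℚ) + 1) * ((2 * n + p + 1) * ∑ k ∈ Finset.range (p + 2), gesselF n (p + 1) k
      - (4 * n + 4 * p + 2) * ∑ k ∈ Finset.range (p + 2), gesselF n p k) = 0 := by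
    calc ((p : ℚ) + 1) * ((2 * n + p + 1) * ∑ k ∈ Finset.range (p + 2), gesselF n (p + 1) k
          - (4 * n + 4 * p + 2) * ∑ k ∈ Finset.range (p + 2), gesselF n p k)
        = ∑ k ∈ Finset.range (p + 2), ((p : ℚ) + 1) * ((2 * n + p + 1) * gesselF n (p + 1) k
            - (4 * n + 4 * p + 2) * gesselF n p k) := by
          rw [Finset.mul_sum, Finset.mul_sum, ← Finset.sum_sub_distrib, ← Finset.mul_sum]
      _ = ∑ k ∈ Finset.range (p + 2), (gesselG n p (k + 1) - gesselG n p k) :=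
          Finset.sum_congr rfl fun k _ => gessel_step n p k
      _ = gesselG n p (p + 2) - gesselG n p 0 := Finset.sum_range_sub _ _
      _ = 0 := by rw [g0, gtop, sub_zero]
  have hsplit : ∑ k ∈ Finset.range (p + 2), gesselF n p k
      = ∑ k ∈ Finset.range (p + 1), gesselF n p k := by
    rw [Finset.sum_range_succ, hF, add_zero]
  rw [hsplit] at key
  have hp1 : ((p : ℚ) + 1) ≠ 0 := by positivity
  have h := (mul_eq_zero.mp key).resolve_left hp1
  linarith

private lemma sc_rec (n p : ℕ) :
    ((2 * n : ℚ) + p + 1) * superCatalan n (n + (p + 1))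
      = ((4 * n : ℚ) + 4 * p + 2) * superCatalan n (n + p) := by
  unfold superCatalan
  have e1 : 2 * (n + (p + 1)) = 2 * (n + p) + 1 + 1 := by ring
  have e2 : n + (n + (p + 1)) = n + (n + p) + 1 := by ring
  have e3 : n + (p + 1) = (n + p) + 1 := by ring
  rw [e1, e2, e3, Nat.factorial_succ (2 * (n + p) + 1), Nat.factorial_succ (2 * (n + p)),
    Nat.factorial_succ (n + (n + p)), Nat.factorial_succ (n + p)]
  push_cast
  field_simp
  ring

private lemma gessel_main (n p : ℕ) :
    superCatalan n (n + p) = ∑ k ∈ Finset.range (p + 1), gesselF n p k := by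
  induction p with
  | zero =>
    rw [Finset.sum_range_one]
    simp only [gesselF, superCatalan, pow_zero, one_mul, Nat.mul_zero, Nat.choose_self,
      Nat.cast_one, Nat.factorial_zero, Nat.add_zero]
    rw [show n + n = 2 * n from (two_mul n).symm]
    field_simp
  | succ p ih =>
    have hs := sum_rec n p
    rw [← ih, ← sc_rec n p] at hs
    have hne : ((2 * n : ℚ) + p + 1) ≠ 0 := by positivity
    exact (mul_left_cancel₀ hne hs.symm)

theorem gessel_identity (n p : ℕ) :
    superCatalan n (n + p) =
      ∑ k ∈ Finset.range (p / 2 + 1),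
        (2 : ℚ) ^ (p - 2 * k) * (Nat.choose p (2 * k) : ℚ) * superCatalan n k := by
  rw [gessel_main n p]
  rw [← Finset.sum_subset (Finset.range_subset_range.mpr (by omega : p / 2 + 1 ≤ p + 1))
    (fun k _ hk => ?_)]
  · refine Finset.sum_congr rfl fun k hk => ?_
    have hk2 : 2 * k ≤ p := by
      have := Finset.mem_range.mp hk
      omega
    have key : (2 : ℚ) ^ (p - 2 * k) = 2 ^ p * (4 : ℚ)⁻¹ ^ k := by
      rw [inv_pow, eq_mul_inv_iff_mul_eq₀ (by positivity),
        show (4 : ℚ) = 2 ^ 2 by norm_num, ← pow_mul, ← pow_add, Nat.sub_add_cancel hk2]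
    unfold gesselF
    rw [key]
  · have hkr : p / 2 < k := by
      have := Finset.mem_range.mp (by assumption : k ∈ Finset.range (p + 1))
      have := Finset.mem_range.not.mp hk
      omega
    have hlt : p < 2 * k := by omega
    simp [gesselF, Nat.choose_eq_zero_of_lt hlt]
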